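/- Conditioning increases the multivariate Rényi divergence: D_{α,α₀}(p⁰_{X|G}, r¹_X,…,r^d_X | p_G) ≥ D_α(p⁰_X, r¹_X,…,r^d_X), where p⁰_X(x) = ∑_g p_G(g) p⁰_{X|G}(x|g) is the marginal. -/

import Mathlib

open Finset

/-- Minkowski inequality for finitely many nonnegative functions, `p ≥ 1`. -/
lemma mink_many {ι κ : Type*} [Fintype ι] (s : Finset κ) (a : κ → ι → ℝ)
    (ha : ∀ g i, 0 ≤ a g i) {p : ℝ} (hp : 1 ≤ p) :
    (∑ i, (∑ g ∈ s, a g i) ^ p) ^ (1 / p) ≤ ∑ g ∈ s, (∑ i, (a g i) ^ p) ^ (1 / p) := by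
  classical
  have hp0 : (0:ℝ) < p := lt_of_lt_of_le one_pos hp
  induction s using Finset.induction_on with
  | empty =>
      simp [Real.zero_rpow hp0.ne', Real.zero_rpow (inv_ne_zero hp0.ne'), one_div]
  | insert k s' hk ih =>
      simp only [Finset.sum_insert hk]
      calc (∑ i, (a k i + ∑ g ∈ s', a g i) ^ p) ^ (1 / p)
          ≤ (∑ i, (a k i) ^ p) ^ (1 / p) + (∑ i, (∑ g ∈ s', a g i) ^ p) ^ (1 / p) :=
            Real.Lp_add_le_of_nonneg (s := Finset.univ) hp (fun i _ => ha k i)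
              (fun i _ => Finset.sum_nonneg fun g _ => ha g i)
        _ ≤ (∑ i, (a k i) ^ p) ^ (1 / p) + ∑ g ∈ s', (∑ i, (a g i) ^ p) ^ (1 / p) := by
            linarith [ih]

/-- Reverse Minkowski inequality for finitely many positive functions, `0 < p < 1`. -/
lemma revmink_many {ι κ : Type*} [Fintype ι] [Fintype κ] [Nonempty ι] [Nonempty κ]
    (a : κ → ι → ℝ) (ha : ∀ g i, 0 < a g i) {p : ℝ} (hp0 : 0 < p) (hp1 : p < 1) :
    ∑ g, (∑ i, (a g i) ^ p) ^ (1 / p) ≤ (∑ i, (∑ g : κ, a g i) ^ p) ^ (1 / p) := by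
  classical
  set S : ι → ℝ := fun i => ∑ g : κ, a g i with hS
  have hSpos : ∀ i, 0 < S i := fun i => Finset.sum_pos (fun g _ => (ha g i)) univ_nonempty
  set T : ℝ := ∑ i, (S i) ^ p with hTdef
  have hTpos : 0 < T := Finset.sum_pos
    (fun i _ => Real.rpow_pos_of_pos (hSpos i) p) univ_nonempty
  have hp_ne : p ≠ 0 := hp0.ne'
  have h1p : (0:ℝ) < 1 - p := by linarith
  have key : ∀ g : κ, (∑ i, (a g i) ^ p) ^ (1 / p) ≤
      (∑ i, a g i * (S i) ^ (p - 1)) * T ^ ((1 - p) / p) := by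
    intro g
    have hconj : Real.HolderConjugate (1 / p) (1 / (1 - p)) := by
      constructor
      · rw [one_div, one_div, inv_inv, inv_inv, inv_one]; ring
      · exact one_div_pos.mpr hp0
      · exact one_div_pos.mpr h1p
    have hfpos : ∀ i, 0 < a g i * (S i) ^ (p - 1) := fun i =>
      mul_pos (ha g i) (Real.rpow_pos_of_pos (hSpos i) _)
    have holder := Real.inner_le_Lp_mul_Lq_of_nonneg (Finset.univ) hconj
      (f := fun i => (a g i * (S i) ^ (p - 1)) ^ p)
      (g := fun i => (S i) ^ (p * (1 - p)))
      (fun i _ => (Real.rpow_pos_of_pos (hfpos i) _).le)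
      (fun i _ => (Real.rpow_pos_of_pos (hSpos i) _).le)
    have e1 : ∀ i : ι, (a g i * (S i) ^ (p - 1)) ^ p * (S i) ^ (p * (1 - p))
        = (a g i) ^ p := by
      intro i
      rw [Real.mul_rpow (ha g i).le (Real.rpow_pos_of_pos (hSpos i) _).le, mul_assoc,
        ← Real.rpow_mul (hSpos i).le, ← Real.rpow_add (hSpos i),
        show (p - 1) * p + p * (1 - p) = 0 by ring, Real.rpow_zero, mul_one]
    have e2 : ∀ i : ι, ((a g i * (S i) ^ (p - 1)) ^ p) ^ (1 / p)
        = a g i * (S i) ^ (p - 1) := by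
      intro i
      rw [← Real.rpow_mul (hfpos i).le, mul_one_div_cancel hp_ne, Real.rpow_one]
    have e3 : ∀ i : ι, ((S i) ^ (p * (1 - p))) ^ (1 / (1 - p)) = (S i) ^ p := by
      intro i
      rw [← Real.rpow_mul (hSpos i).le, mul_assoc,
        mul_one_div_cancel h1p.ne', mul_one]
    simp only [e1, e2, e3, one_div_one_div] at holder
    -- holder : ∑ a^p ≤ (∑ a*S^(p-1)) ^ p * T ^ (1-p)
    have hsum_pos : 0 < ∑ i, a g i * (S i) ^ (p - 1) :=
      Finset.sum_pos (fun i _ => hfpos i) univ_nonempty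
    have := Real.rpow_le_rpow
      (Finset.sum_nonneg fun i _ => (Real.rpow_pos_of_pos (ha g i) _).le) holder
      (le_of_lt (by positivity : (0:ℝ) < 1 / p))
    rwa [Real.mul_rpow (Real.rpow_pos_of_pos hsum_pos _).le
        (Real.rpow_pos_of_pos hTpos _).le,
      ← Real.rpow_mul hsum_pos.le, mul_one_div_cancel hp_ne, Real.rpow_one,
      ← Real.rpow_mul hTpos.le, mul_one_div] at this
  calc ∑ g : κ, (∑ i, (a g i) ^ p) ^ (1 / p)
      ≤ ∑ g : κ, (∑ i, a g i * (S i) ^ (p - 1)) * T ^ ((1 - p) / p) :=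
        Finset.sum_le_sum fun g _ => key g
    _ = (∑ i, S i * (S i) ^ (p - 1)) * T ^ ((1 - p) / p) := by
        rw [← Finset.sum_mul, Finset.sum_comm]
        congr 1
        exact Finset.sum_congr rfl fun i _ => by rw [Finset.sum_mul]
    _ = T * T ^ ((1 - p) / p) := by
        congr 1
        refine Finset.sum_congr rfl fun i _ => ?_
        have : S i ^ p = S i * S i ^ (p - 1) := by
          nth_rewrite 1 [show p = 1 + (p - 1) by ring]
          rw [Real.rpow_add (hSpos i), Real.rpow_one]
        rw [this]
    _ = T ^ (1 / p) := by
        rw [show (1:ℝ) / p = 1 + (1 - p) / p by field_simp; ring,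
          Real.rpow_add hTpos, Real.rpow_one]

/-- Conditioning increases the multivariate Rényi divergence (Corollary
`c:c1`): the conditional divergence of `(p0_{X|G}, r¹, …, r^d)` given `p_G`
dominates the unconditional divergence with the marginal
`p0_X(x) = ∑_g p_G(g) p0(x|g)`. -/
theorem conditional_ge_unconditional_multivariate_renyi
    {X G : Type*} [Fintype X] [Fintype G] [Nonempty X] [Nonempty G] (d : ℕ)
    (pG : G → ℝ) (p0 : X → G → ℝ) (r : Fin d → X → ℝ)
    (α : Fin (d + 1) → ℝ)
    (hpG_pos : ∀ g, 0 < pG g) (hpG_sum : ∑ g, pG g = 1)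
    (hp0_pos : ∀ x g, 0 < p0 x g) (hp0_sum : ∀ g, ∑ x, p0 x g = 1)
    (hr_pos : ∀ k x, 0 < r k x) (hr_sum : ∀ k, ∑ x, r k x = 1)
    (hα_sum : ∑ k, α k = 1)
    (hα_cond : (∀ k, 0 ≤ α k) ∨
      (1 < α 0 ∧ ∀ k : Fin d, α k.succ ≤ 0))
    (hα0_max : ∀ k, α k ≤ α 0) (hα0_ne : α 0 ≠ 1) :
    (1 / (α 0 - 1)) * Real.log
        (∑ x, ((∑ g, pG g * p0 x g) ^ (α 0) *
          ∏ k : Fin d, (r k x) ^ (α k.succ))) ≤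
      (α 0 / (α 0 - 1)) * Real.log
        (∑ g, pG g *
          (∑ x, ((p0 x g) ^ (α 0) * ∏ k : Fin d, (r k x) ^ (α k.succ))) ^ (1 / α 0)) := by
  classical
  -- positivity of α 0
  have hcard : (1:ℝ) ≤ (d + 1) * α 0 := by
    calc (1:ℝ) = ∑ k, α k := hα_sum.symm
      _ ≤ ∑ _k : Fin (d + 1), α 0 := Finset.sum_le_sum fun k _ => hα0_max k
      _ = (d + 1) * α 0 := by
          rw [Finset.sum_const, Finset.card_univ, Fintype.card_fin, nsmul_eq_mul]
          push_cast; ring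
  have hα0_pos : 0 < α 0 := by nlinarith [Nat.cast_nonneg (α := ℝ) d]
  set φ : X → ℝ := fun x => ∏ k : Fin d, (r k x) ^ (α k.succ / α 0) with hφ
  have hφ_pos : ∀ x, 0 < φ x := fun x =>
    Finset.prod_pos fun k _ => Real.rpow_pos_of_pos (hr_pos k x) _
  set a : G → X → ℝ := fun g x => pG g * p0 x g * φ x with ha_def
  have ha_pos : ∀ g x, 0 < a g x := fun g x =>
    mul_pos (mul_pos (hpG_pos g) (hp0_pos x g)) (hφ_pos x)
  have hφ_pow : ∀ x, (φ x) ^ (α 0) = ∏ k : Fin d, (r k x) ^ (α k.succ) := by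
    intro x
    rw [hφ, ← Real.finset_prod_rpow _ _
      (fun k _ => (Real.rpow_pos_of_pos (hr_pos k x) _).le)]
    refine Finset.prod_congr rfl fun k _ => ?_
    rw [← Real.rpow_mul (hr_pos k x).le, div_mul_cancel₀ _ hα0_pos.ne']
  have e1 : ∀ x, (∑ g, pG g * p0 x g) ^ (α 0) * ∏ k : Fin d, (r k x) ^ (α k.succ)
      = (∑ g, a g x) ^ (α 0) := by
    intro x
    have hsum : (∑ g, a g x) = (∑ g, pG g * p0 x g) * φ x := by
      rw [Finset.sum_mul]
    rw [hsum, Real.mul_rpow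
      (Finset.sum_nonneg fun g _ => (mul_pos (hpG_pos g) (hp0_pos x g)).le)
      (hφ_pos x).le, hφ_pow x]
  have e2 : ∀ g, pG g * (∑ x, ((p0 x g) ^ (α 0) * ∏ k : Fin d, (r k x) ^ (α k.succ)))
      ^ (1 / α 0) = (∑ x, (a g x) ^ (α 0)) ^ (1 / α 0) := by
    intro g
    have ea : ∀ x, (a g x) ^ (α 0)
        = (pG g) ^ (α 0) * ((p0 x g) ^ (α 0) * ∏ k : Fin d, (r k x) ^ (α k.succ)) := by
      intro x
      rw [ha_def]
      rw [Real.mul_rpow (mul_pos (hpG_pos g) (hp0_pos x g)).le (hφ_pos x).le,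
        Real.mul_rpow (hpG_pos g).le (hp0_pos x g).le, hφ_pow x, mul_assoc]
    simp only [ea]
    rw [← Finset.mul_sum, Real.mul_rpow (Real.rpow_pos_of_pos (hpG_pos g) _).le
      (Finset.sum_nonneg fun x _ => (mul_pos (Real.rpow_pos_of_pos (hp0_pos x g) _)
        (Finset.prod_pos fun k _ => Real.rpow_pos_of_pos (hr_pos k x) _)).le),
      ← Real.rpow_mul (hpG_pos g).le, mul_one_div_cancel hα0_pos.ne', Real.rpow_one]
  simp only [e1, e2]
  set A : ℝ := ∑ x, (∑ g, a g x) ^ (α 0) with hA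
  set B : ℝ := ∑ g, (∑ x, (a g x) ^ (α 0)) ^ (1 / α 0) with hB
  have hApos : 0 < A := Finset.sum_pos (fun x _ => Real.rpow_pos_of_pos
    (Finset.sum_pos (fun g _ => ha_pos g x) univ_nonempty) _) univ_nonempty
  have hBpos : 0 < B := Finset.sum_pos (fun g _ => Real.rpow_pos_of_pos
    (Finset.sum_pos (fun x _ => Real.rpow_pos_of_pos (ha_pos g x) _) univ_nonempty) _)
    univ_nonempty
  have hlogA : (1 / (α 0 - 1)) * Real.log A
      = (α 0 / (α 0 - 1)) * Real.log (A ^ (1 / α 0)) := by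
    have hne1 : α 0 - 1 ≠ 0 := sub_ne_zero.mpr hα0_ne
    rw [Real.log_rpow hApos, ← mul_assoc]
    congr 1
    field_simp
  rw [hlogA]
  rcases lt_or_gt_of_ne hα0_ne with hlt | hgt
  · -- α 0 < 1 : reverse Minkowski, coefficient negative
    have hcoef : α 0 / (α 0 - 1) < 0 := div_neg_of_pos_of_neg hα0_pos (by linarith)
    have hmink : B ≤ A ^ (1 / α 0) := revmink_many a ha_pos hα0_pos hlt
    have hlog : Real.log B ≤ Real.log (A ^ (1 / α 0)) :=
      Real.log_le_log hBpos hmink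
    nlinarith [hlog, hcoef]
  · -- 1 < α 0 : Minkowski, coefficient positive
    have hcoef : 0 < α 0 / (α 0 - 1) := div_pos hα0_pos (by linarith)
    have hmink : A ^ (1 / α 0) ≤ B := mink_many Finset.univ a
      (fun g x => (ha_pos g x).le) hgt.le
    have hlog : Real.log (A ^ (1 / α 0)) ≤ Real.log B :=
      Real.log_le_log (Real.rpow_pos_of_pos hApos _) hmink
    nlinarith [hlog, hcoef]
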